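/- Let Y₁,…,Y_m be mutually independent random vectors in ℝ^m, each with a linearly full rank distribution, and let Y = [Y₁,…,Y_m] ∈ ℝ^{m×m} be the matrix with these columns. Let M(λ) be an m×m matrix each of whose entries is a polynomial in λ with real coefficients, and let f be a nonzero polynomial with real coefficients. Then ℙ( there exists λ ∈ ℂ with f(λ) ≠ 0 such that rank_ℂ( Y − M(λ)/f(λ) ) < m − 1 ) = 0. -/

import Mathlib

open Matrix MeasureTheory ProbabilityTheory
open Set Submodule Polynomial

/-- A random vector in `ℝ^m` has a linearly full rank distribution: it lies in any fixed
affine hyperplane with probability zero. -/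
def LinFullRankDistribution {m : ℕ} {Ω : Type*} [MeasurableSpace Ω] (μ : Measure Ω)
    (X : Ω → (Fin m → ℝ)) : Prop :=
  ∀ (a : Fin m → ℝ) (c : ℝ), a ≠ 0 → μ {ω | a ⬝ᵥ X ω = c} = 0

namespace RankDefAux

/-- Projection of a closed set along a compact set is closed. -/
lemma isClosed_proj {X Y : Type*} [TopologicalSpace X] [TopologicalSpace Y]
    {K : Set Y} (hK : IsCompact K) {C : Set (X × Y)} (hC : IsClosed C) :
    IsClosed {x : X | ∃ y ∈ K, (x, y) ∈ C} := by
  haveI : CompactSpace K := isCompact_iff_compactSpace.mp hK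
  have hmap : IsClosedMap (Prod.fst : X × K → X) := isClosedMap_fst_of_compactSpace
  have hcont : Continuous (fun p : X × K => (p.1, (p.2 : Y))) :=
    continuous_fst.prodMk (continuous_subtype_val.comp continuous_snd)
  have h := hmap _ (hC.preimage hcont)
  convert h using 1
  ext x
  constructor
  · rintro ⟨y, hyK, hy⟩
    exact ⟨(x, ⟨y, hyK⟩), hy, rfl⟩
  · rintro ⟨⟨x', y⟩, hy, rfl⟩
    exact ⟨y, y.2, hy⟩

/-- A proper subspace of `K^m` is annihilated by a nonzero dot-product functional. -/
lemma exists_dot_eq_zero {K : Type*} [Field K] {m : ℕ} (S : Submodule K (Fin m → K))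
    (hS : Module.finrank K S < m) :
    ∃ a : Fin m → K, a ≠ 0 ∧ ∀ w ∈ S, a ⬝ᵥ w = 0 := by
  have hne : S ≠ ⊤ := by
    intro h
    rw [h] at hS
    have : Module.finrank K (⊤ : Submodule K (Fin m → K)) = m := by
      rw [finrank_top, Module.finrank_pi]
      simp
    omega
  obtain ⟨φ, hφ, hbot⟩ := S.exists_dual_map_eq_bot_of_lt_top (lt_top_iff_ne_top.mpr hne)
    inferInstance
  set a : Fin m → K := fun i => φ (fun j => if i = j then 1 else 0) with ha
  have key : ∀ x : Fin m → K, φ x = a ⬝ᵥ x := by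
    intro x
    rw [LinearMap.pi_apply_eq_sum_univ φ x, dotProduct]
    refine Finset.sum_congr rfl fun i _ => ?_
    rw [smul_eq_mul, mul_comm, ha]
  refine ⟨a, ?_, ?_⟩
  · intro h0
    apply hφ
    refine LinearMap.ext fun x => ?_
    rw [key x, h0]
    simp
  · intro w hw
    have hφw : φ w ∈ S.map φ := Submodule.mem_map_of_mem hw
    rw [hbot] at hφw
    rw [← key w]
    simpa using hφw

/-- ℝ-linearly independent real vectors are ℂ-linearly independent after coercion. -/
lemma li_complex {k m : ℕ} {w : Fin k → Fin m → ℝ}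
    (h : LinearIndependent ℝ w) :
    LinearIndependent ℂ (fun j => fun i => ((w j i : ℝ) : ℂ)) := by
  rw [Fintype.linearIndependent_iff] at h ⊢
  intro g hg j
  have hre : ∀ i, (∑ j, g j * (w j i : ℂ)).re = 0 ∧ (∑ j, g j * (w j i : ℂ)).im = 0 := by
    intro i
    have := congr_fun hg i
    simp only [Finset.sum_apply, Pi.smul_apply, smul_eq_mul, Pi.zero_apply] at this
    rw [this]
    simp
  have h1 : ∀ i, ∑ j, (g j).re * w j i = 0 := by
    intro i
    have := (hre i).1
    rw [Complex.re_sum] at this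
    simpa [Complex.mul_re] using this
  have h2 : ∀ i, ∑ j, (g j).im * w j i = 0 := by
    intro i
    have := (hre i).2
    rw [Complex.im_sum] at this
    simpa [Complex.mul_im] using this
  have hr := h (fun j => (g j).re) (by funext i; simpa using h1 i) j
  have hi := h (fun j => (g j).im) (by funext i; simpa using h2 i) j
  exact Complex.ext hr hi


variable {k m : ℕ}

/-- The (non-conjugated) Gram matrix of a family of vectors. -/
noncomputable def gram {R : Type*} [CommRing R] (u : Fin k → Fin m → R) :
    Matrix (Fin k) (Fin k) R :=
  (Matrix.of fun i j => u j i)ᵀ * (Matrix.of fun i j => u j i)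

lemma gram_apply {R : Type*} [CommRing R] (u : Fin k → Fin m → R) (j j' : Fin k) :
    gram u j j' = ∑ i, u j i * u j' i := by
  simp [gram, Matrix.mul_apply]

lemma gram_det_eq_zero {u : Fin k → Fin m → ℂ} (h : ¬ LinearIndependent ℂ u) :
    (gram u).det = 0 := by
  rw [Fintype.not_linearIndependent_iff] at h
  obtain ⟨g, hg, j, hj⟩ := h
  rw [← Matrix.exists_mulVec_eq_zero_iff]
  refine ⟨g, fun h0 => hj (congr_fun h0 j), ?_⟩
  have hUg : (Matrix.of fun i j => u j i) *ᵥ g = 0 := by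
    funext i
    have := congr_fun hg i
    simp only [Finset.sum_apply, Pi.smul_apply, smul_eq_mul, Pi.zero_apply] at this
    simpa [Matrix.mulVec, dotProduct, mul_comm] using this
  rw [gram, ← Matrix.mulVec_mulVec, hUg, Matrix.mulVec_zero]

lemma gram_det_ne_zero {B : Fin k → Fin m → ℝ} (h : LinearIndependent ℝ B) :
    (gram fun j => fun i => ((B j i : ℝ) : ℂ)).det ≠ 0 := by
  have hmap : (gram fun j => fun i => ((B j i : ℝ) : ℂ)) =
      (gram B).map Complex.ofRealHom := by
    ext j j'
    simp [gram_apply, Matrix.map_apply]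
  rw [hmap, ← RingHom.mapMatrix_apply, ← RingHom.map_det]
  simp only [Complex.ofRealHom_eq_coe, ne_eq, Complex.ofReal_eq_zero]
  -- now show the real Gram determinant is nonzero
  intro hdet
  rw [← Matrix.exists_mulVec_eq_zero_iff] at hdet
  obtain ⟨v, hv, hGv⟩ := hdet
  set Bm : Matrix (Fin m) (Fin k) ℝ := Matrix.of fun i j => B j i with hBm
  have hdot : (Bm *ᵥ v) ⬝ᵥ (Bm *ᵥ v) = v ⬝ᵥ ((gram B) *ᵥ v) := by
    rw [gram, ← hBm, ← Matrix.mulVec_mulVec, Matrix.dotProduct_mulVec v,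
      Matrix.vecMul_transpose]
  rw [hGv, dotProduct_zero] at hdot
  have hBv : Bm *ᵥ v = 0 := by
    funext i
    have hsq : ∑ i, (Bm *ᵥ v) i * (Bm *ᵥ v) i = 0 := hdot
    have := Finset.sum_eq_zero_iff_of_nonneg (fun i _ => mul_self_nonneg ((Bm *ᵥ v) i))
      |>.mp hsq i (Finset.mem_univ i)
    exact mul_self_eq_zero.mp this
  apply hv
  rw [Fintype.linearIndependent_iff] at h
  have : ∀ j, v j = 0 := by
    apply h
    funext i
    have := congr_fun hBv i
    simpa [hBm, Matrix.mulVec, dotProduct, mul_comm] using this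
  funext j; exact this j

lemma fub {m : ℕ} {Ω : Type*} [MeasurableSpace Ω] (μ : Measure Ω) [IsProbabilityMeasure μ]
    (Y : Fin m → Ω → (Fin m → ℝ)) (hmeas : ∀ j, Measurable (Y j))
    (hindep : iIndepFun Y μ)
    {n : ℕ} (hn : n < m)
    {S : Set ((Fin n → (Fin m → ℝ)) × (Fin m → ℝ))} (hS : MeasurableSet S)
    (hfib : ∀ y, (μ.map (Y ⟨n, hn⟩)) {x | (y, x) ∈ S} = 0) :
    μ {ω | ((fun j : Fin n => Y (Fin.castLE hn.le j) ω), Y ⟨n, hn⟩ ω) ∈ S} = 0 := by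
  set F : Ω → (Fin n → Fin m → ℝ) := fun ω j => Y (Fin.castLE hn.le j) ω with hF
  set G : Ω → (Fin m → ℝ) := Y ⟨n, hn⟩ with hG
  have hFmeas : Measurable F := measurable_pi_lambda _ (fun j => hmeas _)
  have hGmeas : Measurable G := hmeas _
  have hdisj : Disjoint (Finset.image (Fin.castLE hn.le) Finset.univ) {(⟨n, hn⟩ : Fin m)} := by
    rw [Finset.disjoint_right]
    intro a ha hmem
    simp only [Finset.mem_singleton] at ha
    simp only [Finset.mem_image, Finset.mem_univ, true_and] at hmem
    obtain ⟨j, hj⟩ := hmem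
    have hv : a.val = j.val := by rw [← hj]; rfl
    rw [ha] at hv
    have hv' : n = j.val := hv
    have := j.isLt
    omega
  have h1 := hindep.indepFun_finset (Finset.image (Fin.castLE hn.le) Finset.univ)
    {(⟨n, hn⟩ : Fin m)} hdisj hmeas
  have hindepFG : IndepFun F G μ := by
    have hφ : Measurable (fun (h : (i : (Finset.image (Fin.castLE hn.le) Finset.univ : Finset (Fin m))) → (Fin m → ℝ)) =>
        (fun j : Fin n => h ⟨Fin.castLE hn.le j, by simp⟩)) :=
      measurable_pi_lambda _ (fun j => measurable_pi_apply _)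
    have hψ : Measurable (fun (h : (i : ({(⟨n, hn⟩ : Fin m)} : Finset (Fin m))) → (Fin m → ℝ)) =>
        h ⟨⟨n, hn⟩, by simp⟩) := measurable_pi_apply _
    have := h1.comp hφ hψ
    exact this
  have hmap : μ.map (fun ω => (F ω, G ω)) = (μ.map F).prod (μ.map G) :=
    (indepFun_iff_map_prod_eq_prod_map_map hFmeas.aemeasurable hGmeas.aemeasurable).mp hindepFG
  have : {ω | ((fun j : Fin n => Y (Fin.castLE hn.le j) ω), Y ⟨n, hn⟩ ω) ∈ S}
      = (fun ω => (F ω, G ω)) ⁻¹' S := rfl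
  rw [this, ← Measure.map_apply (hFmeas.prodMk hGmeas) hS, hmap]
  haveI : IsProbabilityMeasure (μ.map F) := Measure.isProbabilityMeasure_map hFmeas.aemeasurable
  haveI : IsProbabilityMeasure (μ.map G) := Measure.isProbabilityMeasure_map hGmeas.aemeasurable
  rw [Measure.prod_apply hS]
  have : ∀ y, (μ.map G) (Prod.mk y ⁻¹' S) = 0 := fun y => hfib y
  simp only [this]
  simp




lemma dot_hyperplane_null {m : ℕ} {Ω : Type*} [MeasurableSpace Ω] (μ : Measure Ω)
    (Y : Fin m → Ω → (Fin m → ℝ)) (hmeas : ∀ j, Measurable (Y j))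
    (hfull : ∀ (j : Fin m) (a : Fin m → ℝ) (d : ℝ), a ≠ 0 → μ {ω | a ⬝ᵥ Y j ω = d} = 0)
    (j : Fin m) {a : Fin m → ℝ} (ha : a ≠ 0) (d : ℝ) :
    (μ.map (Y j)) {x | a ⬝ᵥ x = d} = 0 := by
  have hcont : Continuous (fun x : Fin m → ℝ => a ⬝ᵥ x) := by
    unfold dotProduct
    exact continuous_finset_sum _ fun i _ => (continuous_const.mul (continuous_apply i))
  rw [Measure.map_apply (hmeas j) ((isClosed_eq hcont continuous_const).measurableSet)]
  exact hfull j a d ha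

/-- The shifted columns are a.s. linearly independent. -/
lemma as_li {m : ℕ} {Ω : Type*} [MeasurableSpace Ω] (μ : Measure Ω) [IsProbabilityMeasure μ]
    (Y : Fin m → Ω → (Fin m → ℝ)) (hmeas : ∀ j, Measurable (Y j))
    (hindep : iIndepFun Y μ)
    (hfull : ∀ (j : Fin m) (a : Fin m → ℝ) (d : ℝ), a ≠ 0 → μ {ω | a ⬝ᵥ Y j ω = d} = 0)
    (c : Fin m → Fin m → ℝ) :
    ∀ n : ℕ, ∀ hn : n ≤ m, μ {ω | ¬ LinearIndependent ℝ
      (fun j : Fin n => Y (Fin.castLE hn j) ω - c (Fin.castLE hn j))} = 0 := by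
  intro n
  induction n with
  | zero =>
    intro hn
    have : {ω : Ω | ¬ LinearIndependent ℝ
        (fun j : Fin 0 => Y (Fin.castLE hn j) ω - c (Fin.castLE hn j))} = ∅ := by
      ext ω
      simp only [mem_setOf_eq, mem_empty_iff_false, iff_false, not_not]
      exact linearIndependent_empty_type
    rw [this, measure_empty]
  | succ n IH =>
    intro hn
    have hn' : n ≤ m := le_trans (Nat.le_succ n) hn
    have hnm : n < m := lt_of_lt_of_le (Nat.lt_succ_self n) hn
    set S : Set ((Fin n → (Fin m → ℝ)) × (Fin m → ℝ)) :=
      {p | p.2 - c ⟨n, hnm⟩ ∈ span ℝ (range (fun j : Fin n => p.1 j - c (Fin.castLE hn' j)))}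
      with hSdef
    have hSmeas : MeasurableSet S := by
      have hUnion : S = ⋃ (r : ℕ), {p : (Fin n → (Fin m → ℝ)) × (Fin m → ℝ) |
          ∃ a ∈ Metric.closedBall (0 : Fin n → ℝ) r,
            (∑ j, a j • (p.1 j - c (Fin.castLE hn' j))) = p.2 - c ⟨n, hnm⟩} := by
        ext p
        simp only [hSdef, mem_setOf_eq, mem_iUnion, mem_span_range_iff_exists_fun]
        constructor
        · rintro ⟨a, ha⟩
          obtain ⟨r, hr⟩ := exists_nat_ge ‖a‖
          exact ⟨r, a, by simpa [Metric.mem_closedBall, dist_zero_right] using hr, ha⟩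
        · rintro ⟨r, a, _, ha⟩
          exact ⟨a, ha⟩
      rw [hUnion]
      refine MeasurableSet.iUnion fun r => ?_
      refine IsClosed.measurableSet ?_
      have hC : IsClosed {q : (((Fin n → (Fin m → ℝ)) × (Fin m → ℝ)) × (Fin n → ℝ)) |
          (∑ j, q.2 j • (q.1.1 j - c (Fin.castLE hn' j))) = q.1.2 - c ⟨n, hnm⟩} := by
        refine isClosed_eq ?_ ?_
        · refine continuous_finset_sum _ fun j _ => Continuous.smul
            ((continuous_apply j).comp continuous_snd) ?_
          exact ((continuous_apply j).comp (continuous_fst.comp continuous_fst)).sub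
            continuous_const
        · exact (continuous_snd.comp continuous_fst).sub continuous_const
      exact isClosed_proj (isCompact_closedBall (0 : Fin n → ℝ) r) hC
    have hfib : ∀ y, (μ.map (Y ⟨n, hnm⟩)) {x | (y, x) ∈ S} = 0 := by
      intro y
      set V := span ℝ (range (fun j : Fin n => y j - c (Fin.castLE hn' j))) with hV
      have hfr : Module.finrank ℝ V ≤ n := by
        refine le_trans (finrank_span_le_card _) ?_
        rw [Set.toFinset_range]
        exact le_trans (Finset.card_image_le) (by simp)
      obtain ⟨a, ha0, hann⟩ := exists_dot_eq_zero V (lt_of_le_of_lt hfr hnm)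
      have hsub : {x : Fin m → ℝ | (y, x) ∈ S} ⊆ {x | a ⬝ᵥ x = a ⬝ᵥ c ⟨n, hnm⟩} := by
        intro x hx
        have h0 := hann _ hx
        rw [dotProduct_sub] at h0
        simpa [sub_eq_zero] using h0
      refine measure_mono_null hsub ?_
      exact dot_hyperplane_null μ Y hmeas hfull _ ha0 _
    have hincl : {ω : Ω | ¬ LinearIndependent ℝ
        (fun j : Fin (n+1) => Y (Fin.castLE hn j) ω - c (Fin.castLE hn j))} ⊆
        {ω : Ω | ¬ LinearIndependent ℝ
          (fun j : Fin n => Y (Fin.castLE hn' j) ω - c (Fin.castLE hn' j))} ∪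
        {ω : Ω | ((fun j : Fin n => Y (Fin.castLE hnm.le j) ω), Y ⟨n, hnm⟩ ω) ∈ S} := by
      intro ω hω
      simp only [mem_setOf_eq] at hω
      have hsnoc : (fun j : Fin (n+1) => Y (Fin.castLE hn j) ω - c (Fin.castLE hn j)) =
          Fin.snoc (fun j : Fin n => Y (Fin.castLE hn' j) ω - c (Fin.castLE hn' j))
            (Y ⟨n, hnm⟩ ω - c ⟨n, hnm⟩) := by
        funext j
        refine Fin.lastCases ?_ ?_ j
        · rw [Fin.snoc_last]
          rfl
        · intro i
          rw [Fin.snoc_castSucc]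
          rfl
      rw [hsnoc, linearIndependent_fin_snoc, not_and_or, not_not] at hω
      rcases hω with h | h
      · exact Or.inl h
      · right
        simp only [mem_setOf_eq, hSdef]
        convert h using 2
      
    refine le_antisymm ?_ zero_le
    refine le_trans (measure_mono hincl) ?_
    refine le_trans (measure_union_le _ _) ?_
    rw [IH hn', fub μ Y hmeas hindep hnm hSmeas hfib]
    simp


lemma span_smul_range {K V : Type*} [Field K] [AddCommGroup V] [Module K V]
    {k : ℕ} {c : K} (hc : c ≠ 0) (w : Fin k → V) :
    span K (range fun j => c • w j) = span K (range w) := by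
  apply le_antisymm
  · rw [span_le]
    rintro v ⟨j, rfl⟩
    exact smul_mem _ _ (subset_span (mem_range_self j))
  · rw [span_le]
    rintro v ⟨j, rfl⟩
    have : w j = c⁻¹ • (c • w j) := by rw [inv_smul_smul₀ hc]
    rw [this]
    exact smul_mem _ _ (subset_span (mem_range_self j))

lemma complex_hyperplane_null {m : ℕ} {Ω : Type*} [MeasurableSpace Ω] (μ : Measure Ω)
    (Y : Fin m → Ω → (Fin m → ℝ)) (hmeas : ∀ j, Measurable (Y j))
    (hfull : ∀ (j : Fin m) (a : Fin m → ℝ) (d : ℝ), a ≠ 0 → μ {ω | a ⬝ᵥ Y j ω = d} = 0)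
    (j : Fin m) {a : Fin m → ℂ} (ha : a ≠ 0) (w : ℂ) :
    (μ.map (Y j)) {x : Fin m → ℝ | ∑ i, a i * (x i : ℂ) = w} = 0 := by
  have hex : ∃ i, a i ≠ 0 := by
    by_contra h
    push_neg at h
    exact ha (funext h)
  obtain ⟨i0, hi0⟩ := hex
  by_cases hre : (fun i => (a i).re) = 0
  · have him : (fun i => (a i).im) ≠ 0 := by
      intro h
      apply hi0
      have h1 := congr_fun hre i0
      have h2 := congr_fun h i0
      simp only [Pi.zero_apply] at h1 h2
      exact Complex.ext h1 h2
    refine measure_mono_null (fun x hx => ?_) (dot_hyperplane_null μ Y hmeas hfull j him w.im)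
    simp only [mem_setOf_eq] at hx ⊢
    have := congrArg Complex.im hx
    rw [Complex.im_sum] at this
    simpa [dotProduct, Complex.mul_im] using this
  · refine measure_mono_null (fun x hx => ?_) (dot_hyperplane_null μ Y hmeas hfull j hre w.re)
    simp only [mem_setOf_eq] at hx ⊢
    have := congrArg Complex.re hx
    rw [Complex.re_sum] at this
    simpa [dotProduct, Complex.mul_re] using this

end RankDefAux

set_option maxHeartbeats 2000000 in
/-- if `Y = [Y₁, …, Y_m]` has independent columns with linearly full rank
distributions, `M(λ)` has polynomial entries and `f ≠ 0` is a real polynomial, then almost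
surely there is no `λ ∈ ℂ` with `f(λ) ≠ 0` and `rank_ℂ(Y - M(λ)/f(λ)) < m - 1`. -/
theorem rank_deficiency_null {m : ℕ}
    {Ω : Type*} [MeasurableSpace Ω] (μ : Measure Ω) [IsProbabilityMeasure μ]
    (Y : Fin m → Ω → (Fin m → ℝ))
    (hmeas : ∀ j : Fin m, Measurable (Y j))
    (hindep : iIndepFun Y μ)
    (hfull : ∀ j : Fin m, LinFullRankDistribution μ (Y j))
    (M : Matrix (Fin m) (Fin m) (Polynomial ℝ)) (f : Polynomial ℝ) (hf : f ≠ 0) :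
    μ {ω | ∃ lam : ℂ, Polynomial.aeval lam f ≠ 0 ∧
        (Matrix.of fun i j : Fin m =>
            ((Y j ω i : ℝ) : ℂ)
              - Polynomial.aeval lam (M i j) / Polynomial.aeval lam f).rank
          < m - 1} = 0 := by
  classical
  have hfull' : ∀ (j : Fin m) (a : Fin m → ℝ) (d : ℝ), a ≠ 0 → μ {ω | a ⬝ᵥ Y j ω = d} = 0 :=
    fun j => hfull j
  obtain ⟨l0, hl0⟩ : ∃ x : ℝ, eval x f ≠ 0 := by
    obtain ⟨x, hx⟩ := ((Polynomial.finite_setOf_isRoot hf).infinite_compl).nonempty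
    exact ⟨x, hx⟩
  set u : Fin m → ℂ → (Fin m → ℝ) → (Fin m → ℂ) :=
    fun j lam y i => Polynomial.aeval lam f * (y i : ℂ) - Polynomial.aeval lam (M i j) with hu
  set c : Fin m → Fin m → ℝ := fun j i => eval l0 (M i j) / eval l0 f with hc
  have hu0 : ∀ (jm : Fin m) (y : Fin m → ℝ) (i : Fin m),
      u jm ((l0 : ℝ) : ℂ) y i = ((eval l0 f * (y i - c jm i) : ℝ) : ℂ) := by
    intro jm y i
    have h1 : eval l0 f * (y i - c jm i) = eval l0 f * y i - eval l0 (M i jm) := by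
      rw [hc]
      field_simp
    rw [h1, hu]
    simp only
    rw [show ((l0 : ℝ) : ℂ) = algebraMap ℝ ℂ l0 from rfl,
      aeval_algebraMap_apply_eq_algebraMap_eval, aeval_algebraMap_apply_eq_algebraMap_eval]
    simp only [Complex.coe_algebraMap]
    push_cast
    ring
  have main : ∀ n : ℕ, ∀ hn : n ≤ m, μ {ω | ∃ lam : ℂ, Polynomial.aeval lam f ≠ 0 ∧
      Module.finrank ℂ (span ℂ (range (fun j : Fin n =>
        u (Fin.castLE hn j) lam (Y (Fin.castLE hn j) ω)))) + 1 < n} = 0 := by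
    intro n
    induction n with
    | zero =>
      intro hn
      have : {ω : Ω | ∃ lam : ℂ, Polynomial.aeval lam f ≠ 0 ∧
          Module.finrank ℂ (span ℂ (range (fun j : Fin 0 =>
            u (Fin.castLE hn j) lam (Y (Fin.castLE hn j) ω)))) + 1 < 0} = ∅ := by
        ext ω
        simp
      rw [this, measure_empty]
    | succ n IH =>
      intro hn
      rcases Nat.eq_zero_or_pos n with hn0 | hn0
      · subst hn0
        have : {ω : Ω | ∃ lam : ℂ, Polynomial.aeval lam f ≠ 0 ∧
            Module.finrank ℂ (span ℂ (range (fun j : Fin 1 =>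
              u (Fin.castLE hn j) lam (Y (Fin.castLE hn j) ω)))) + 1 < 1} = ∅ := by
          ext ω
          simp only [mem_setOf_eq, mem_empty_iff_false, iff_false, not_exists]
          intro lam h
          omega
        rw [this, measure_empty]
      have hn' : n ≤ m := le_trans (Nat.le_succ n) hn
      have hnm : n < m := lt_of_lt_of_le (Nat.lt_succ_self n) hn
      set Gm : ℂ → (Fin n → Fin m → ℝ) → Matrix (Fin n) (Fin n) ℂ :=
        fun lam y => RankDefAux.gram (fun j => u (Fin.castLE hn' j) lam (y j)) with hGm
      set gg : (Fin n → Fin m → ℝ) → Polynomial ℂ := fun y =>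
        (Matrix.of fun j j' : Fin n => ∑ i,
          (Polynomial.C ((y j i : ℝ) : ℂ) * f.map (algebraMap ℝ ℂ)
            - (M i (Fin.castLE hn' j)).map (algebraMap ℝ ℂ)) *
          (Polynomial.C ((y j' i : ℝ) : ℂ) * f.map (algebraMap ℝ ℂ)
            - (M i (Fin.castLE hn' j')).map (algebraMap ℝ ℂ))).det with hgg
      have heval : ∀ (lam : ℂ) (y : Fin n → Fin m → ℝ),
          Polynomial.eval lam (gg y) = (Gm lam y).det := by
        intro lam y
        rw [hgg]
        simp only
        rw [show Polynomial.eval lam = ⇑(Polynomial.evalRingHom lam) from rfl, RingHom.map_det]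
        congr 1
        ext j j'
        simp only [RingHom.mapMatrix_apply, Matrix.map_apply, Matrix.of_apply, coe_evalRingHom]
        rw [Polynomial.eval_finset_sum, hGm]
        simp only
        rw [RankDefAux.gram_apply]
        refine Finset.sum_congr rfl fun i _ => ?_
        rw [Polynomial.eval_mul]
        congr 1 <;>
        · rw [Polynomial.eval_sub, Polynomial.eval_mul, Polynomial.eval_C, Polynomial.eval_map,
            Polynomial.eval_map, hu]
          simp only
          rw [← Polynomial.aeval_def, ← Polynomial.aeval_def]
          ring
      have hucont : ∀ {X : Type} [TopologicalSpace X] (jm i : Fin m) {g1 : X → ℂ}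
          {g2 : X → Fin m → ℝ}, Continuous g1 → Continuous g2 →
          Continuous (fun x => u jm (g1 x) (g2 x) i) := by
        intro X _ jm i g1 g2 hg1 hg2
        rw [hu]
        simp only
        exact ((Polynomial.continuous_aeval (p := f)).comp hg1 |>.mul
          (Complex.continuous_ofReal.comp ((continuous_apply i).comp hg2))).sub
          ((Polynomial.continuous_aeval (p := M i jm)).comp hg1)
      have hGmdetcont : ∀ {X : Type} [TopologicalSpace X] {g1 : X → ℂ}
          {g2 : X → Fin n → Fin m → ℝ}, Continuous g1 → Continuous g2 →
          Continuous (fun x => (Gm (g1 x) (g2 x)).det) := by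
        intro X _ g1 g2 hg1 hg2
        apply Continuous.matrix_det
        apply continuous_matrix
        intro j j'
        have hfunc : (fun x => (Gm (g1 x) (g2 x)) j j')
            = fun x => ∑ i, u (Fin.castLE hn' j) (g1 x) (g2 x j) i
              * u (Fin.castLE hn' j') (g1 x) (g2 x j') i := by
          funext x
          rw [hGm]
          simp only
          rw [RankDefAux.gram_apply]
        rw [hfunc]
        exact continuous_finset_sum _ fun i _ =>
          (hucont _ i hg1 ((continuous_apply j).comp hg2)).mul
          (hucont _ i hg1 ((continuous_apply j').comp hg2))
      set SW : Set ((Fin n → (Fin m → ℝ)) × (Fin m → ℝ)) :=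
        {p | gg p.1 ≠ 0 ∧ ∃ lam : ℂ, Polynomial.aeval lam f ≠ 0 ∧ (Gm lam p.1).det = 0 ∧
          u ⟨n, hnm⟩ lam p.2 ∈ span ℂ
            (range (fun j : Fin n => u (Fin.castLE hn' j) lam (p.1 j)))} with hSW
      have hSWmeas : MeasurableSet SW := by
        have hsplit : SW = {p : (Fin n → (Fin m → ℝ)) × (Fin m → ℝ) | gg p.1 ≠ 0} ∩
            {p | ∃ lam : ℂ, Polynomial.aeval lam f ≠ 0 ∧ (Gm lam p.1).det = 0 ∧
              u ⟨n, hnm⟩ lam p.2 ∈ span ℂ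
                (range (fun j : Fin n => u (Fin.castLE hn' j) lam (p.1 j)))} := rfl
        rw [hsplit]
        refine MeasurableSet.inter ?_ ?_
        · have hA : {p : (Fin n → (Fin m → ℝ)) × (Fin m → ℝ) | gg p.1 ≠ 0}
              = ⋃ (N : ℕ), {p | (Gm ((N : ℕ) : ℂ) p.1).det ≠ 0} := by
            ext p
            simp only [mem_setOf_eq, mem_iUnion]
            constructor
            · intro hne
              by_contra hall
              push_neg at hall
              apply hne
              apply Polynomial.eq_zero_of_infinite_isRoot
              exact Set.infinite_of_injective_forall_mem (f := fun N : ℕ => (N : ℂ))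
                Nat.cast_injective (fun N => by
                  simp only [mem_setOf_eq, IsRoot.def]
                  rw [heval]
                  exact hall N)
            · rintro ⟨N, hN⟩ h0
              apply hN
              rw [← heval, h0, Polynomial.eval_zero]
          rw [hA]
          refine MeasurableSet.iUnion fun N => ?_
          exact ((isClosed_eq (hGmdetcont continuous_const continuous_fst)
            continuous_const).measurableSet).compl
        · have hBeq : {p : (Fin n → (Fin m → ℝ)) × (Fin m → ℝ) | ∃ lam : ℂ,
              Polynomial.aeval lam f ≠ 0 ∧ (Gm lam p.1).det = 0 ∧
              u ⟨n, hnm⟩ lam p.2 ∈ span ℂ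
                (range (fun j : Fin n => u (Fin.castLE hn' j) lam (p.1 j)))}
              = ⋃ (N : ℕ) (r : ℕ) (r' : ℕ),
                {p | ∃ z ∈ (Metric.closedBall (0 : ℂ) r) ×ˢ (Metric.closedBall (0 : Fin n → ℂ) r'),
                  ((1 : ℝ)/(N+1) ≤ ‖Polynomial.aeval z.1 f‖ ∧ (Gm z.1 p.1).det = 0 ∧
                  (∑ j, z.2 j • u (Fin.castLE hn' j) z.1 (p.1 j)) = u ⟨n, hnm⟩ z.1 p.2)} := by
            ext p
            simp only [mem_setOf_eq, mem_iUnion]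
            constructor
            · rintro ⟨lam, hlam, hdet, hsp⟩
              obtain ⟨N, hN⟩ := exists_nat_one_div_lt (norm_pos_iff.mpr hlam)
              obtain ⟨r, hr⟩ := exists_nat_ge ‖lam‖
              rw [mem_span_range_iff_exists_fun] at hsp
              obtain ⟨a, ha⟩ := hsp
              obtain ⟨r', hr'⟩ := exists_nat_ge ‖a‖
              refine ⟨N, r, r', ⟨lam, a⟩, ?_, hN.le, hdet, ha⟩
              simp only [Set.mem_prod, Metric.mem_closedBall, dist_zero_right]
              exact ⟨hr, hr'⟩
            · rintro ⟨N, r, r', ⟨lam, a⟩, hz, hnorm, hdet, hsum⟩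
              refine ⟨lam, ?_, hdet, ?_⟩
              · intro h0
                rw [h0] at hnorm
                simp only [norm_zero] at hnorm
                have : (0 : ℝ) < 1/(N+1) := by positivity
                linarith
              · rw [mem_span_range_iff_exists_fun]
                exact ⟨a, hsum⟩
          rw [hBeq]
          refine MeasurableSet.iUnion fun N => MeasurableSet.iUnion fun r =>
            MeasurableSet.iUnion fun r' => IsClosed.measurableSet ?_
          have hK : IsCompact ((Metric.closedBall (0 : ℂ) r) ×ˢ
              (Metric.closedBall (0 : Fin n → ℂ) r')) :=
            (isCompact_closedBall _ _).prod (isCompact_closedBall _ _)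
          have h1 : IsClosed {q : ((Fin n → (Fin m → ℝ)) × (Fin m → ℝ)) × (ℂ × (Fin n → ℂ)) |
              (1 : ℝ)/(N+1) ≤ ‖Polynomial.aeval q.2.1 f‖} :=
            isClosed_le continuous_const
              (((Polynomial.continuous_aeval (p := f)).comp (continuous_fst.comp continuous_snd)).norm)
          have h2 : IsClosed {q : ((Fin n → (Fin m → ℝ)) × (Fin m → ℝ)) × (ℂ × (Fin n → ℂ)) |
              (Gm q.2.1 q.1.1).det = 0} :=
            isClosed_eq (hGmdetcont (continuous_fst.comp continuous_snd)
              (continuous_fst.comp continuous_fst)) continuous_const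
          have h3 : IsClosed {q : ((Fin n → (Fin m → ℝ)) × (Fin m → ℝ)) × (ℂ × (Fin n → ℂ)) |
              (∑ j, q.2.2 j • u (Fin.castLE hn' j) q.2.1 (q.1.1 j)) = u ⟨n, hnm⟩ q.2.1 q.1.2} := by
            refine isClosed_eq ?_ ?_
            · apply continuous_pi
              intro i
              have hfn : (fun q : ((Fin n → (Fin m → ℝ)) × (Fin m → ℝ)) × (ℂ × (Fin n → ℂ)) =>
                  (∑ j, q.2.2 j • u (Fin.castLE hn' j) q.2.1 (q.1.1 j)) i)
                  = fun q => ∑ j, q.2.2 j * u (Fin.castLE hn' j) q.2.1 (q.1.1 j) i := by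
                funext q
                simp [Finset.sum_apply]
              rw [hfn]
              refine continuous_finset_sum _ fun j _ => Continuous.mul ?_ ?_
              · exact (continuous_apply j).comp (continuous_snd.comp continuous_snd)
              · exact hucont _ i (continuous_fst.comp continuous_snd)
                  ((continuous_apply j).comp (continuous_fst.comp continuous_fst))
            · apply continuous_pi
              intro i
              exact hucont _ i (continuous_fst.comp continuous_snd)
                (continuous_snd.comp continuous_fst)
          exact RankDefAux.isClosed_proj hK (h1.inter (h2.inter h3))
      have hfib : ∀ y, (μ.map (Y ⟨n, hnm⟩)) {x | (y, x) ∈ SW} = 0 := by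
        intro y
        by_cases hggy : gg y = 0
        · have hempty : {x : Fin m → ℝ | (y, x) ∈ SW} = ∅ := by
            ext x
            simp only [hSW, mem_setOf_eq, mem_empty_iff_false, iff_false]
            rintro ⟨hne, -⟩
            exact hne hggy
          rw [hempty]
          exact measure_empty
        · have hT : {z : ℂ | (gg y).IsRoot z}.Countable :=
            (Polynomial.finite_setOf_isRoot hggy).countable
          have hsub : {x : Fin m → ℝ | (y, x) ∈ SW} ⊆
              ⋃ lam ∈ {z : ℂ | (gg y).IsRoot z}, {x : Fin m → ℝ |
                Polynomial.aeval lam f ≠ 0 ∧ u ⟨n, hnm⟩ lam x ∈ span ℂ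
                  (range (fun j : Fin n => u (Fin.castLE hn' j) lam (y j)))} := by
            intro x hx
            obtain ⟨-, lam, hlam, hdet, hsp⟩ := hx
            refine mem_biUnion ?_ ⟨hlam, hsp⟩
            simp only [mem_setOf_eq, IsRoot.def]
            rw [heval]
            exact hdet
          refine measure_mono_null hsub ((measure_biUnion_null_iff hT).mpr ?_)
          intro lam _
          by_cases hflam : Polynomial.aeval lam f = 0
          · have hempty : {x : Fin m → ℝ | Polynomial.aeval lam f ≠ 0 ∧
                u ⟨n, hnm⟩ lam x ∈ span ℂ
                  (range (fun j : Fin n => u (Fin.castLE hn' j) lam (y j)))} = ∅ := by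
              ext x
              simp [hflam]
            rw [hempty]
            exact measure_empty
          · set V := span ℂ (range (fun j : Fin n => u (Fin.castLE hn' j) lam (y j))) with hV
            have hfr : Module.finrank ℂ V ≤ n := by
              refine le_trans (finrank_span_le_card _) ?_
              rw [Set.toFinset_range]
              exact le_trans (Finset.card_image_le) (by simp)
            obtain ⟨a, ha0, hann⟩ := RankDefAux.exists_dot_eq_zero V (lt_of_le_of_lt hfr hnm)
            set wv : ℂ := (∑ i, a i * Polynomial.aeval lam (M i ⟨n, hnm⟩)) / Polynomial.aeval lam f
              with hwv
            refine measure_mono_null (fun x hx => ?_)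
              (RankDefAux.complex_hyperplane_null μ Y hmeas hfull' ⟨n, hnm⟩ ha0 wv)
            obtain ⟨-, hsp⟩ := hx
            have h0 := hann _ hsp
            simp only [mem_setOf_eq]
            rw [hwv, eq_div_iff hflam]
            have hexp : a ⬝ᵥ (u ⟨n, hnm⟩ lam x) = (∑ i, a i * (x i : ℂ)) * Polynomial.aeval lam f
                - ∑ i, a i * Polynomial.aeval lam (M i ⟨n, hnm⟩) := by
              rw [hu]
              simp only [dotProduct]
              rw [Finset.sum_mul, ← Finset.sum_sub_distrib]
              refine Finset.sum_congr rfl fun i _ => ?_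
              ring
            rw [hexp] at h0
            exact sub_eq_zero.mp h0
      set D : Set Ω := {ω | ¬ LinearIndependent ℝ
        (fun j : Fin n => Y (Fin.castLE hn' j) ω - c (Fin.castLE hn' j))} with hD
      have hDnull : μ D = 0 := RankDefAux.as_li μ Y hmeas hindep hfull' c n hn'
      have hstep : {ω : Ω | ∃ lam : ℂ, Polynomial.aeval lam f ≠ 0 ∧
          Module.finrank ℂ (span ℂ (range (fun j : Fin (n+1) =>
            u (Fin.castLE hn j) lam (Y (Fin.castLE hn j) ω)))) + 1 < n+1} ⊆
          ({ω : Ω | ∃ lam : ℂ, Polynomial.aeval lam f ≠ 0 ∧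
            Module.finrank ℂ (span ℂ (range (fun j : Fin n =>
              u (Fin.castLE hn' j) lam (Y (Fin.castLE hn' j) ω)))) + 1 < n} ∪ D) ∪
          {ω : Ω | ((fun j : Fin n => Y (Fin.castLE hnm.le j) ω), Y ⟨n, hnm⟩ ω) ∈ SW} := by
        intro ω hω
        obtain ⟨lam, hlam, hrank⟩ := hω
        set vinit := fun j : Fin n => u (Fin.castLE hn' j) lam (Y (Fin.castLE hn' j) ω) with hvinit
        set vfull := fun j : Fin (n+1) => u (Fin.castLE hn j) lam (Y (Fin.castLE hn j) ω) with hvfull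
        have hrange : range vinit ⊆ range vfull := by
          rintro w ⟨j, rfl⟩
          exact ⟨Fin.castSucc j, rfl⟩
        have hle : span ℂ (range vinit) ≤ span ℂ (range vfull) := span_mono hrange
        have hdA : Module.finrank ℂ (span ℂ (range vinit))
            ≤ Module.finrank ℂ (span ℂ (range vfull)) := Submodule.finrank_mono hle
        by_cases hcase : Module.finrank ℂ (span ℂ (range vinit)) + 1 < n
        · exact Or.inl (Or.inl ⟨lam, hlam, hcase⟩)
        · have hdAeq : Module.finrank ℂ (span ℂ (range vinit)) + 1 = n := by omega
          by_cases hDmem : ω ∈ D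
          · exact Or.inl (Or.inr hDmem)
          · refine Or.inr ?_
            simp only [hSW, mem_setOf_eq]
            constructor
            · -- gg ≠ 0
              have hLI : LinearIndependent ℝ
                  (fun j : Fin n => Y (Fin.castLE hn' j) ω - c (Fin.castLE hn' j)) :=
                not_not.mp hDmem
              set B : Fin n → Fin m → ℝ :=
                fun j => eval l0 f • (Y (Fin.castLE hn' j) ω - c (Fin.castLE hn' j)) with hB
              have hBLI : LinearIndependent ℝ B := by
                rw [Fintype.linearIndependent_iff] at hLI ⊢
                intro g hg j
                have hg2 : ∑ jj, (g jj * eval l0 f) •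
                    (Y (Fin.castLE hn' jj) ω - c (Fin.castLE hn' jj)) = 0 := by
                  rw [← hg]
                  refine Finset.sum_congr rfl fun jj _ => ?_
                  rw [hB]
                  simp only
                  rw [smul_smul]
                have := hLI _ hg2 j
                rcases mul_eq_zero.mp this with h | h
                · exact h
                · exact absurd h hl0
              have hgram : Gm ((l0 : ℝ) : ℂ) (fun j => Y (Fin.castLE hnm.le j) ω) =
                  RankDefAux.gram (fun j => fun i => ((B j i : ℝ) : ℂ)) := by
                have hargs : (fun j : Fin n => u (Fin.castLE hn' j) ((l0 : ℝ) : ℂ)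
                    (Y (Fin.castLE hnm.le j) ω)) = fun j => fun i => ((B j i : ℝ) : ℂ) := by
                  funext j i
                  rw [hu0, hB]
                  simp only [Pi.smul_apply, smul_eq_mul, Pi.sub_apply]
                rw [hGm]
                simp only
                rw [hargs]
              have hdet0 : (Gm ((l0 : ℝ) : ℂ) (fun j => Y (Fin.castLE hnm.le j) ω)).det ≠ 0 := by
                rw [hgram]
                exact RankDefAux.gram_det_ne_zero hBLI
              intro h0
              apply hdet0
              rw [← heval, h0, Polynomial.eval_zero]
            · refine ⟨lam, hlam, ?_, ?_⟩
              · have hnli : ¬ LinearIndependent ℂ vinit := by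
                  intro hli
                  have h2 := finrank_span_eq_card hli
                  rw [Fintype.card_fin] at h2
                  omega
                have hGmeq : Gm lam (fun j => Y (Fin.castLE hnm.le j) ω)
                    = RankDefAux.gram vinit := rfl
                rw [hGmeq]
                exact RankDefAux.gram_det_eq_zero hnli
              · have hspeq : span ℂ (range vinit) = span ℂ (range vfull) :=
                  Submodule.eq_of_le_of_finrank_le hle (by omega)
                have hmem : vfull (Fin.last n) ∈ span ℂ (range vfull) :=
                  subset_span (mem_range_self _)
                rw [← hspeq] at hmem
                exact hmem
      refine le_antisymm ?_ zero_le
      refine le_trans (measure_mono hstep) ?_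
      refine le_trans (measure_union_le _ _) ?_
      have h1 : μ ({ω : Ω | ∃ lam : ℂ, Polynomial.aeval lam f ≠ 0 ∧
          Module.finrank ℂ (span ℂ (range (fun j : Fin n =>
            u (Fin.castLE hn' j) lam (Y (Fin.castLE hn' j) ω)))) + 1 < n} ∪ D) = 0 := by
        refine le_antisymm ?_ zero_le
        refine le_trans (measure_union_le _ _) ?_
        rw [IH hn', hDnull]
        simp
      rw [h1, RankDefAux.fub μ Y hmeas hindep hnm hSWmeas hfib]
      simp
  refine le_antisymm ?_ zero_le
  refine le_trans (measure_mono ?_) (le_of_eq (main m le_rfl))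
  intro ω hω
  obtain ⟨lam, hlam, hrank⟩ := hω
  refine ⟨lam, hlam, ?_⟩
  have hcols : (Matrix.of fun i j : Fin m => ((Y j ω i : ℝ) : ℂ)
      - Polynomial.aeval lam (M i j) / Polynomial.aeval lam f)ᵀ
      = fun j => (Polynomial.aeval lam f)⁻¹ •
        u (Fin.castLE le_rfl j) lam (Y (Fin.castLE le_rfl j) ω) := by
    funext j i
    simp only [Matrix.transpose_apply, Matrix.of_apply, Pi.smul_apply, smul_eq_mul, hu, Fin.castLE_rfl, id]
    field_simp
  have hrk : (Matrix.of fun i j : Fin m => ((Y j ω i : ℝ) : ℂ)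
      - Polynomial.aeval lam (M i j) / Polynomial.aeval lam f).rank
      = Module.finrank ℂ (span ℂ (range (fun j : Fin m =>
        u (Fin.castLE le_rfl j) lam (Y (Fin.castLE le_rfl j) ω)))) := by
    rw [Matrix.rank_eq_finrank_span_cols, Matrix.col, hcols,
      RankDefAux.span_smul_range (inv_ne_zero hlam)]
  rw [hrk] at hrank
  omega
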